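/- Let f : R → S be a homomorphism of commutative noetherian rings such that S is finitely generated as an R-module, let M be an R-module, and let N be an injective R-module. Then the natural Hom-evaluation map Θ : S ⊗_R Hom_R(M,N) → Hom_R(Hom_R(S,M), N), defined by Θ(s ⊗ ψ)(φ) = ψ(φ(s)), is an isomorphism of S-modules. -/

import Mathlib

universe u

open TensorProduct CategoryTheory

noncomputable section

/-- The `S`-module structure on `Hom_R(S, M)` coming from the `S`-action on the first slot:
`(s • φ) t = φ (s * t)`. -/
def homModS {R S : Type u} [CommRing R] [CommRing S] [Algebra R S]
    (M : Type u) [AddCommGroup M] [Module R M] :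
    Module S (S →ₗ[R] M) where
  smul s φ := φ.comp (LinearMap.mulLeft R s)
  one_smul φ := by
    ext t
    show φ (1 * t) = φ t
    rw [one_mul]
  mul_smul s s' φ := by
    ext t
    show φ ((s * s') * t) = φ (s' * (s * t))
    rw [mul_assoc, mul_left_comm]
  smul_zero s := by ext t; rfl
  smul_add s φ ψ := by ext t; rfl
  add_smul s s' φ := by
    ext t
    show φ ((s + s') * t) = φ (s * t) + φ (s' * t)
    rw [add_mul, map_add]
  zero_smul φ := by
    ext t
    show φ (0 * t) = 0
    rw [zero_mul, map_zero]


section Aux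


variable {R : Type u} [CommRing R]
variable (M N : Type u) [AddCommGroup M] [Module R M] [AddCommGroup N] [Module R N]

def thetaMap (P : Type u) [AddCommGroup P] [Module R P] :
    P ⊗[R] (M →ₗ[R] N) →ₗ[R] ((P →ₗ[R] M) →ₗ[R] N) :=
  TensorProduct.lift
    { toFun := fun p =>
        { toFun := fun ψ =>
            { toFun := fun φ => ψ (φ p)
              map_add' := by intros; simp
              map_smul' := by intros; simp }
          map_add' := by intros; ext; simp
          map_smul' := by intros; ext; simp }
      map_add' := by intros; ext; simp
      map_smul' := by intros; ext; simp }

@[simp] lemma thetaMap_tmul (P : Type u) [AddCommGroup P] [Module R P]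
    (p : P) (ψ : M →ₗ[R] N) (φ : P →ₗ[R] M) :
    thetaMap M N P (p ⊗ₜ ψ) φ = ψ (φ p) := rfl

lemma thetaMap_natural {P Q : Type u} [AddCommGroup P] [Module R P]
    [AddCommGroup Q] [Module R Q] (g : P →ₗ[R] Q)
    (x : P ⊗[R] (M →ₗ[R] N)) (φ : Q →ₗ[R] M) :
    thetaMap M N Q (g.rTensor _ x) φ = thetaMap M N P x (φ ∘ₗ g) := by
  induction x with
  | zero => simp
  | tmul p ψ => simp
  | add x y hx hy => simp [hx, hy]

/-- `Lmap i m : (Fin n → R) →ₗ M` is `p ↦ p i • m`, linear in `m`. -/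
def Lmap (n : ℕ) (i : Fin n) : M →ₗ[R] ((Fin n → R) →ₗ[R] M) where
  toFun m :=
    { toFun := fun p => p i • m
      map_add' := by intros; simp [add_smul]
      map_smul' := by intros; simp [mul_smul] }
  map_add' := by intros; ext p; simp [smul_add]
  map_smul' := fun c m => by
    ext p
    simp only [LinearMap.coe_mk, AddHom.coe_mk, LinearMap.smul_apply, RingHom.id_apply]
    exact smul_comm _ _ _

@[simp] lemma Lmap_apply (n : ℕ) (i : Fin n) (m : M) (p : Fin n → R) :
    Lmap M n i m p = p i • m := rfl

lemma theta_free_bijective (n : ℕ) :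
    Function.Bijective (thetaMap (R := R) M N (Fin n → R)) := by
  let e : Fin n → (Fin n → R) := fun i j => if i = j then (1 : R) else 0
  let G : (((Fin n → R) →ₗ[R] M) →ₗ[R] N) →ₗ[R] (Fin n → R) ⊗[R] (M →ₗ[R] N) :=
    { toFun := fun F => ∑ i, e i ⊗ₜ[R] (F ∘ₗ Lmap M n i)
      map_add' := by
        intro F F'
        simp [LinearMap.add_comp, tmul_add, Finset.sum_add_distrib]
      map_smul' := by
        intro c F
        simp [LinearMap.smul_comp, tmul_smul, Finset.smul_sum] }
  have hGθ : ∀ x, G (thetaMap (R := R) M N (Fin n → R) x) = x := by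
    intro x
    induction x with
    | zero => simp
    | tmul p ψ =>
      have hcomp : ∀ i, (thetaMap (R := R) M N (Fin n → R) (p ⊗ₜ ψ)) ∘ₗ Lmap M n i = p i • ψ := by
        intro i
        ext m
        simp
      show ∑ i, e i ⊗ₜ[R] ((thetaMap (R := R) M N (Fin n → R) (p ⊗ₜ ψ)) ∘ₗ Lmap M n i) = p ⊗ₜ ψ
      rw [Finset.sum_congr rfl fun i _ => by rw [hcomp i]]
      have : ∑ i, e i ⊗ₜ[R] (p i • ψ) = ∑ i, (p i • e i) ⊗ₜ[R] ψ := by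
        refine Finset.sum_congr rfl fun i _ => ?_
        rw [tmul_smul, smul_tmul']
      rw [this, ← sum_tmul]
      congr 1
      exact (pi_eq_sum_univ p).symm
    | add x y hx hy => simp only [map_add, hx, hy]
  have hθG : ∀ F, thetaMap (R := R) M N (Fin n → R) (G F) = F := by
    intro F
    ext φ
    show thetaMap (R := R) M N (Fin n → R) (∑ i, e i ⊗ₜ[R] (F ∘ₗ Lmap M n i)) φ = F φ
    rw [map_sum]
    simp only [thetaMap_tmul, LinearMap.sum_apply, LinearMap.comp_apply]
    rw [← map_sum]
    congr 1
    refine LinearMap.ext fun p => ?_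
    simp only [LinearMap.sum_apply, Lmap_apply]
    exact (LinearMap.pi_apply_eq_sum_univ φ p).symm
  exact ⟨Function.LeftInverse.injective hGθ, Function.RightInverse.surjective hθG⟩

lemma exists_factor {A B C : Type u} [AddCommGroup A] [AddCommGroup B] [AddCommGroup C]
    [Module R A] [Module R B] [Module R C] (f : A →ₗ[R] B) (g : A →ₗ[R] C)
    (hf : Function.Surjective f) (h : LinearMap.ker f ≤ LinearMap.ker g) :
    ∃ h' : B →ₗ[R] C, h' ∘ₗ f = g := by
  have key : ∀ a a', f a = f a' → g a = g a' := by
    intro a a' hfa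
    have h1 : a - a' ∈ LinearMap.ker f := by simp [LinearMap.mem_ker, map_sub, hfa]
    have h2 := h h1
    rw [LinearMap.mem_ker, map_sub, sub_eq_zero] at h2
    exact h2
  choose σ hσ using hf
  refine ⟨{ toFun := fun b => g (σ b), map_add' := ?_, map_smul' := ?_ }, ?_⟩
  · intro b b'; rw [← map_add]; exact key _ _ (by simp [hσ])
  · intro c b
    simp only [RingHom.id_apply]
    rw [← map_smul]
    exact key _ _ (by simp [hσ])
  · ext a; exact key _ _ (hσ (f a))

lemma theta_bijective_of_finite [IsNoetherianRing R] (hN : Module.Injective R N)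
    (P : Type u) [AddCommGroup P] [Module R P] [Module.Finite R P] :
    Function.Bijective (thetaMap (R := R) M N P) := by
  obtain ⟨n, π, hπ⟩ := Module.Finite.exists_fin' R P
  have hker_fg : Module.Finite R ↥(LinearMap.ker π) := by
    have : IsNoetherian R (Fin n → R) := inferInstance
    exact Module.Finite.iff_fg.mpr (IsNoetherian.noetherian _)
  obtain ⟨m, g, hg⟩ := Module.Finite.exists_fin' R ↥(LinearMap.ker π)
  set d : (Fin m → R) →ₗ[R] (Fin n → R) := (LinearMap.ker π).subtype ∘ₗ g with hd_def
  have hrange_d : LinearMap.range d = LinearMap.ker π := by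
    rw [hd_def, LinearMap.range_comp, LinearMap.range_eq_top.mpr hg, Submodule.map_top,
      Submodule.range_subtype]
  have hπd : π ∘ₗ d = 0 := by
    refine LinearMap.ext fun y => ?_
    have : d y ∈ LinearMap.ker π := hrange_d ▸ LinearMap.mem_range_self d y
    simpa using this
  have hF0 := theta_free_bijective (R := R) M N n
  have hF1 := theta_free_bijective (R := R) M N m
  -- the precomposition maps
  set πs : (P →ₗ[R] M) →ₗ[R] ((Fin n → R) →ₗ[R] M) := LinearMap.lcomp R M π with hπs_def
  set ds : ((Fin n → R) →ₗ[R] M) →ₗ[R] ((Fin m → R) →ₗ[R] M) := LinearMap.lcomp R M d with hds_def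
  have hπs_inj : Function.Injective πs := by
    intro φ φ' hφ
    ext x
    obtain ⟨y, rfl⟩ := hπ x
    exact LinearMap.congr_fun hφ y
  constructor
  · -- injectivity
    intro x x' hxx'
    rw [← sub_eq_zero, ← map_sub] at hxx'
    rw [← sub_eq_zero]
    obtain ⟨x0, hx0z⟩ := LinearMap.rTensor_surjective (M →ₗ[R] N) hπ (x - x')
    rw [← hx0z] at hxx' ⊢
    set G0 : ((Fin n → R) →ₗ[R] M) →ₗ[R] N := thetaMap (R := R) M N (Fin n → R) x0 with hG0
    have hvanish : ∀ φ : P →ₗ[R] M, G0 (πs φ) = 0 := by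
      intro φ
      have := thetaMap_natural M N π x0 φ
      rw [hxx'] at this
      exact (by simpa [hG0] using this.symm : thetaMap (R := R) M N (Fin n → R) x0 (φ ∘ₗ π) = 0)
    -- ker ds ≤ ker G0
    have hker_le : LinearMap.ker ds ≤ LinearMap.ker G0 := by
      intro φ0 hφ0
      rw [LinearMap.mem_ker] at hφ0 ⊢
      -- φ0 ∘ d = 0, so ker π = range d ≤ ker φ0, factor through π
      have hle : LinearMap.ker π ≤ LinearMap.ker φ0 := by
        rw [← hrange_d]
        rintro _ ⟨y, rfl⟩
        have : ds φ0 y = 0 := by rw [hφ0]; rfl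
        simpa [hds_def] using this
      obtain ⟨φ, hφ⟩ := exists_factor π φ0 hπ hle
      rw [← hφ]
      exact hvanish φ
    -- factor G0 = G1 ∘ ds using injectivity of N
    obtain ⟨G1', hG1'⟩ := exists_factor ds.rangeRestrict G0 ds.surjective_rangeRestrict
      (by rw [LinearMap.ker_rangeRestrict]; exact hker_le)
    obtain ⟨G1, hG1⟩ := hN.out (LinearMap.range ds).subtype (Submodule.injective_subtype _) G1'
    have hG0_eq : ∀ φ0, G1 (ds φ0) = G0 φ0 := by
      intro φ0
      have h1 := hG1 (ds.rangeRestrict φ0)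
      have h2 : (LinearMap.range ds).subtype (ds.rangeRestrict φ0) = ds φ0 := rfl
      rw [h2] at h1
      rw [h1, ← hG1']
      rfl
    obtain ⟨x1, hx1⟩ := hF1.2 G1
    have hx0 : x0 = d.rTensor (M →ₗ[R] N) x1 := by
      apply hF0.1
      ext φ0
      rw [thetaMap_natural M N d x1 φ0, hx1]
      exact (hG0_eq φ0).symm
    rw [hx0, ← LinearMap.rTensor_comp_apply, hπd]
    simp
  · -- surjectivity
    intro F
    obtain ⟨G0, hG0⟩ := hN.out πs hπs_inj F
    obtain ⟨x0, hx0⟩ := hF0.2 G0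
    refine ⟨π.rTensor (M →ₗ[R] N) x0, ?_⟩
    ext φ
    rw [thetaMap_natural M N π x0 φ, hx0]
    exact hG0 φ

end Aux

/-- Hom-evaluation: for a module-finite algebra `S` over `R`, an `R`-module `M` and an
injective `R`-module `N`, the natural map
`Θ : S ⊗_R Hom_R(M, N) → Hom_R(Hom_R(S, M), N)`, `Θ(s ⊗ ψ)(φ) = ψ(φ(s))`,
is an isomorphism of `S`-modules. -/
theorem hom_evaluation_iso (R S : Type u) [CommRing R] [IsNoetherianRing R]
    [CommRing S] [IsNoetherianRing S] [Algebra R S] [Module.Finite R S]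
    (M N : Type u) [AddCommGroup M] [Module R M] [AddCommGroup N] [Module R N]
    (hN : Module.Injective R N) :
    letI : Module S (S →ₗ[R] M) := homModS M
    ∃ e : (S ⊗[R] (M →ₗ[R] N)) ≃+ ((S →ₗ[R] M) →ₗ[R] N),
      (∀ (s : S) (ψ : M →ₗ[R] N) (φ : S →ₗ[R] M), e (s ⊗ₜ[R] ψ) φ = ψ (φ s)) ∧
      (∀ (s : S) (x : S ⊗[R] (M →ₗ[R] N)) (φ : S →ₗ[R] M),
        e (s • x) φ = e x (s • φ)) := by
  letI : Module S (S →ₗ[R] M) := homModS M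
  have hbij : Function.Bijective (thetaMap (R := R) M N S) :=
    theta_bijective_of_finite M N hN S
  refine ⟨(LinearEquiv.ofBijective (thetaMap (R := R) M N S) hbij).toAddEquiv, ?_, ?_⟩
  · intro s ψ φ
    rfl
  · intro s x φ
    induction x with
    | zero => simp
    | tmul t ψ =>
      have h1 : s • (t ⊗ₜ[R] ψ) = (s * t) ⊗ₜ[R] ψ := by
        rw [TensorProduct.smul_tmul', smul_eq_mul]
      rw [h1]
      rfl
    | add x y hx hy =>
      rw [smul_add, map_add, map_add, LinearMap.add_apply, LinearMap.add_apply, hx, hy]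


end
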